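/- Fix H > 0 with H ≠ 1/2 and define c_H(a,b) := ∫₀^{min(a,b)} (a−u)^{H−1/2} (b−u)^{H−1/2} du for a, b > 0, and write θ_{ij}(τ) := c_H(τ^i, τ^j). Then, as τ ↘ 0, (θ₁₃(τ) θ₂₂(τ) − θ₁₂(τ) θ₂₃(τ)) / (θ₂₂(τ) θ₃₃(τ) − θ₂₃(τ)²) ∼ (4H(1−2H)/(2H+1)²) · τ^{1−2H}. In particular, this ratio is nonzero for all sufficiently small τ > 0. -/

import Mathlib

open MeasureTheory Set Filter intervalIntegral

/-- Covariance function of the Riemann–Liouville process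
`Y_t = ∫₀ᵗ (t−s)^{H−1/2} dB_s`. -/
noncomputable def cH (H a b : ℝ) : ℝ :=
  ∫ u in (0:ℝ)..(min a b), (a - u) ^ (H - 1/2) * (b - u) ^ (H - 1/2)

lemma int_aux {b p : ℝ} (hb : 0 < b) (hp : (-1:ℝ) < p) :
    ∫ u in (0:ℝ)..b, (b - u) ^ p = b ^ (p+1) / (p+1) := by
  have h := intervalIntegral.integral_comp_sub_left (a := (0:ℝ)) (b := b)
    (fun x : ℝ => x ^ p) b
  simp only [sub_zero, sub_self] at h
  rw [h, integral_rpow (Or.inl hp), Real.zero_rpow (by linarith : p + 1 ≠ 0), sub_zero]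

lemma cH_diag {H : ℝ} (hH : 0 < H) (hH' : H ≠ 1/2) {a : ℝ} (ha : 0 < a) :
    cH H a a = a ^ (2*H) / (2*H) := by
  unfold cH
  rw [min_self]
  rw [intervalIntegral.integral_congr (g := fun u => (a - u) ^ (2*H - 1)) ?_]
  · rw [int_aux ha (by linarith : (-1:ℝ) < 2*H - 1)]
    norm_num
  · intro u hu
    rw [uIcc_of_le ha.le] at hu
    have h0 : 0 ≤ a - u := by linarith [hu.2]
    have hne : (H - 1/2) + (H - 1/2) ≠ 0 := by
      intro hc; apply hH'; linarith
    have := Real.rpow_add' h0 hne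
    rw [show (2*H - 1) = (H - 1/2) + (H - 1/2) by ring]
    simp only [this]

lemma cH_bounds {H : ℝ} (hH : 0 < H) {a b : ℝ} (hb : 0 < b) (hba : b < a) :
    min ((a-b) ^ (H-1/2)) (a ^ (H-1/2)) * (b ^ (H+1/2) / (H+1/2)) ≤ cH H a b ∧
    cH H a b ≤ max ((a-b) ^ (H-1/2)) (a ^ (H-1/2)) * (b ^ (H+1/2) / (H+1/2)) := by
  set p := H - 1/2 with hp'
  have hp : (-1:ℝ) < p := by rw [hp']; linarith
  have hmin : min a b = b := min_eq_right hba.le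
  have hib : IntervalIntegrable (fun u : ℝ => (b - u) ^ p) volume 0 b := by
    have h := ((intervalIntegrable_rpow' (a := 0) (b := b) hp).comp_sub_left b).symm
    simpa using h
  have hca : ContinuousOn (fun u : ℝ => (a - u) ^ p) (uIcc 0 b) := by
    apply ContinuousOn.rpow_const
    · exact (continuous_const.sub continuous_id).continuousOn
    · intro x hx
      rw [uIcc_of_le hb.le] at hx
      exact Or.inl (by linarith [hx.2] : a - x ≠ 0)
  have hif : IntervalIntegrable (fun u : ℝ => (a - u) ^ p * (b - u) ^ p) volume 0 b :=
    hib.continuousOn_mul hca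
  have key : ∀ u ∈ Icc (0:ℝ) b,
      min ((a-b)^p) (a^p) * (b-u)^p ≤ (a-u)^p * (b-u)^p ∧
      (a-u)^p * (b-u)^p ≤ max ((a-b)^p) (a^p) * (b-u)^p := by
    intro u hu
    have hbu : 0 ≤ b - u := by linarith [hu.2]
    have hab : 0 < a - b := by linarith
    have h1 : a - b ≤ a - u := by linarith [hu.2]
    have h2 : a - u ≤ a := by linarith [hu.1]
    have hmid : min ((a-b)^p) (a^p) ≤ (a-u)^p ∧ (a-u)^p ≤ max ((a-b)^p) (a^p) := by
      rcases le_or_gt 0 p with h | h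
      · exact ⟨le_trans (min_le_left _ _) (Real.rpow_le_rpow hab.le h1 h),
          le_trans (Real.rpow_le_rpow (by linarith) h2 h) (le_max_right _ _)⟩
      · exact ⟨le_trans (min_le_right _ _) (Real.rpow_le_rpow_of_nonpos (by linarith) h2 h.le),
          le_trans (Real.rpow_le_rpow_of_nonpos hab h1 h.le) (le_max_left _ _)⟩
    have hbp : 0 ≤ (b-u)^p := Real.rpow_nonneg hbu p
    exact ⟨mul_le_mul_of_nonneg_right hmid.1 hbp, mul_le_mul_of_nonneg_right hmid.2 hbp⟩
  have hint : ∀ c : ℝ, ∫ u in (0:ℝ)..b, c * (b-u)^p = c * (b ^ (p+1) / (p+1)) := by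
    intro c; rw [intervalIntegral.integral_const_mul, int_aux hb hp]
  have e : cH H a b = ∫ u in (0:ℝ)..b, (a-u)^p * (b-u)^p := by
    unfold cH; rw [hmin]
  have hq : (H+1/2) = p + 1 := by rw [hp']; ring
  constructor
  · rw [e, hq, ← hint]
    exact intervalIntegral.integral_mono_on hb.le (hib.const_mul _) hif
      (fun u hu => (key u hu).1)
  · rw [e, hq, ← hint]
    exact intervalIntegral.integral_mono_on hb.le hif (hib.const_mul _)
      (fun u hu => (key u hu).2)

lemma r_tendsto {H : ℝ} (hH : 0 < H) (i j : ℕ) (hij : i < j) :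
    Filter.Tendsto (fun τ : ℝ => cH H (τ^i) (τ^j) * (H + 1/2) /
      τ ^ ((i:ℝ)*(H-1/2) + (j:ℝ)*(H+1/2))) (nhdsWithin 0 (Set.Ioi 0)) (nhds 1) := by
  set p := H - 1/2 with hp'
  have hq : (0:ℝ) < H + 1/2 := by linarith
  have hmem : Ioo (0:ℝ) 1 ∈ nhdsWithin (0:ℝ) (Ioi 0) :=
    Ioo_mem_nhdsGT_of_mem ⟨le_refl 0, zero_lt_one⟩
  have hφ : Tendsto (fun τ : ℝ => (1 - τ^(j-i)) ^ p) (nhdsWithin 0 (Ioi 0)) (nhds 1) := by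
    have h1 : Tendsto (fun τ : ℝ => 1 - τ^(j-i)) (nhdsWithin 0 (Ioi 0)) (nhds 1) := by
      have h2 := ((continuous_pow (j-i)).tendsto (0:ℝ)).mono_left
        (nhdsWithin_le_nhds (s := Ioi (0:ℝ)))
      have h0 : (0:ℝ)^(j-i) = 0 := zero_pow (by omega)
      simpa [h0] using tendsto_const_nhds.sub h2
    simpa [Real.one_rpow] using h1.rpow_const (Or.inl one_ne_zero)
  have hg : Tendsto (fun τ : ℝ => min ((1 - τ^(j-i)) ^ p) 1)
      (nhdsWithin 0 (Ioi 0)) (nhds 1) := by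
    have := Tendsto.min hφ
      (tendsto_const_nhds : Tendsto (fun _ : ℝ => (1:ℝ)) (nhdsWithin 0 (Ioi 0)) (nhds 1))
    simpa using this
  have hG : Tendsto (fun τ : ℝ => max ((1 - τ^(j-i)) ^ p) 1)
      (nhdsWithin 0 (Ioi 0)) (nhds 1) := by
    have := Tendsto.max hφ
      (tendsto_const_nhds : Tendsto (fun _ : ℝ => (1:ℝ)) (nhdsWithin 0 (Ioi 0)) (nhds 1))
    simpa using this
  have hbd : ∀ τ ∈ Ioo (0:ℝ) 1,
      min ((1 - τ^(j-i)) ^ p) 1 ≤ cH H (τ^i) (τ^j) * (H + 1/2) /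
        τ ^ ((i:ℝ)*p + (j:ℝ)*(H+1/2)) ∧
      cH H (τ^i) (τ^j) * (H + 1/2) / τ ^ ((i:ℝ)*p + (j:ℝ)*(H+1/2)) ≤
        max ((1 - τ^(j-i)) ^ p) 1 := by
    intro τ hτ
    obtain ⟨hτ0, hτ1⟩ := hτ
    have ha : (0:ℝ) < τ^i := pow_pos hτ0 i
    have hbpos : (0:ℝ) < τ^j := pow_pos hτ0 j
    have hba : τ^j < τ^i := pow_lt_pow_right_of_lt_one₀ hτ0 hτ1 hij
    obtain ⟨hl, hu⟩ := cH_bounds hH hbpos hba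
    have h1m : (0:ℝ) ≤ 1 - τ^(j-i) := by
      have := pow_le_one₀ hτ0.le hτ1.le (n := j - i); linarith
    have hA : (τ^i : ℝ)^p = τ ^ ((i:ℝ)*p) := by
      rw [← Real.rpow_natCast τ i, ← Real.rpow_mul hτ0.le]
    have hB : (τ^j : ℝ)^(H+1/2) = τ ^ ((j:ℝ)*(H+1/2)) := by
      rw [← Real.rpow_natCast τ j, ← Real.rpow_mul hτ0.le]
    have hX : (0:ℝ) < τ ^ ((i:ℝ)*p) := Real.rpow_pos_of_pos hτ0 _
    have hY : (0:ℝ) < τ ^ ((j:ℝ)*(H+1/2)) := Real.rpow_pos_of_pos hτ0 _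
    have hsplit : τ ^ ((i:ℝ)*p + (j:ℝ)*(H+1/2)) =
        τ ^ ((i:ℝ)*p) * τ ^ ((j:ℝ)*(H+1/2)) := Real.rpow_add hτ0 _ _
    have hE : (0:ℝ) < τ ^ ((i:ℝ)*p + (j:ℝ)*(H+1/2)) := Real.rpow_pos_of_pos hτ0 _
    have hdiff : τ^i - τ^j = τ^i * (1 - τ^(j-i)) := by
      rw [mul_sub, mul_one, ← pow_add]
      congr 2
      omega
    have hd : (τ^i - τ^j)^p = τ ^ ((i:ℝ)*p) * (1 - τ^(j-i))^p := by
      rw [hdiff, Real.mul_rpow ha.le h1m, hA]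
    have hm : min ((τ^i - τ^j)^p) ((τ^i : ℝ)^p) =
        min ((1 - τ^(j-i))^p) 1 * τ ^ ((i:ℝ)*p) := by
      rw [hd, hA, min_mul_of_nonneg _ _ hX.le, one_mul, mul_comm]
    have hM : max ((τ^i - τ^j)^p) ((τ^i : ℝ)^p) =
        max ((1 - τ^(j-i))^p) 1 * τ ^ ((i:ℝ)*p) := by
      rw [hd, hA, max_mul_of_nonneg _ _ hX.le, one_mul, mul_comm]
    have hkey : ∀ c : ℝ, (c * τ ^ ((i:ℝ)*p)) * ((τ^j : ℝ)^(H+1/2)/(H+1/2)) * (H+1/2) /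
        τ ^ ((i:ℝ)*p + (j:ℝ)*(H+1/2)) = c := by
      intro c
      rw [hB, hsplit]
      field_simp
    constructor
    · have h1 := mul_le_mul_of_nonneg_right hl hq.le
      have h2 := (div_le_div_iff_of_pos_right hE).mpr h1
      rw [hm, hkey] at h2
      exact h2
    · have h1 := mul_le_mul_of_nonneg_right hu hq.le
      have h2 := (div_le_div_iff_of_pos_right hE).mpr h1
      rw [hM, hkey] at h2
      exact h2
  refine tendsto_of_tendsto_of_tendsto_of_le_of_le' hg hG ?_ ?_
  · filter_upwards [hmem] with τ hτ using (hbd τ hτ).1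
  · filter_upwards [hmem] with τ hτ using (hbd τ hτ).2

set_option maxHeartbeats 1000000 in
/-- With `θ_{ij}(τ) = c_H(τ^i, τ^j)`, the conditional Gaussian mean
`(θ₁₃θ₂₂ − θ₁₂θ₂₃)/(θ₂₂θ₃₃ − θ₂₃²)` is asymptotic to
`(4H(1−2H)/(2H+1)²) τ^{1−2H}` as `τ ↘ 0`; in particular it is nonzero for
all sufficiently small `τ > 0`. -/
theorem stmt_12 (H : ℝ) (hH : 0 < H) (hH' : H ≠ 1/2) :
    Filter.Tendsto (fun τ : ℝ =>
        ((cH H τ (τ ^ 3) * cH H (τ ^ 2) (τ ^ 2)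
            - cH H τ (τ ^ 2) * cH H (τ ^ 2) (τ ^ 3)) /
          (cH H (τ ^ 2) (τ ^ 2) * cH H (τ ^ 3) (τ ^ 3)
            - (cH H (τ ^ 2) (τ ^ 3)) ^ 2)) /
          ((4 * H * (1 - 2 * H) / (2 * H + 1) ^ 2) * τ ^ ((1 : ℝ) - 2 * H)))
      (nhdsWithin 0 (Set.Ioi 0)) (nhds 1) ∧
    ∀ᶠ τ in nhdsWithin (0 : ℝ) (Set.Ioi 0),
      (cH H τ (τ ^ 3) * cH H (τ ^ 2) (τ ^ 2)
          - cH H τ (τ ^ 2) * cH H (τ ^ 2) (τ ^ 3)) /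
        (cH H (τ ^ 2) (τ ^ 2) * cH H (τ ^ 3) (τ ^ 3)
          - (cH H (τ ^ 2) (τ ^ 3)) ^ 2) ≠ 0 := by
  have hq : (0:ℝ) < H + 1/2 := by linarith
  have hq0 : (H + 1/2 : ℝ) ≠ 0 := ne_of_gt hq
  have h2H : (2*H : ℝ) ≠ 0 := by positivity
  have h12H : (1 - 2*H : ℝ) ≠ 0 := by intro h; apply hH'; linarith
  have h2H1 : ((2*H+1 : ℝ))^2 ≠ 0 := by positivity
  have hC : (4*H*(1-2*H)/(2*H+1)^2 : ℝ) ≠ 0 := by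
    apply div_ne_zero _ h2H1
    apply mul_ne_zero _ h12H
    positivity
  -- the three rescaled off-diagonal covariance functions
  have h13 : Tendsto (fun τ : ℝ => cH H τ (τ^3) * (H+1/2) / τ ^ (4*H+1))
      (nhdsWithin 0 (Ioi 0)) (nhds 1) := by
    have h := r_tendsto hH 1 3 (by norm_num)
    have he : (fun τ : ℝ => cH H (τ^1) (τ^3) * (H+1/2) /
        τ ^ (((1:ℕ):ℝ)*(H-1/2) + ((3:ℕ):ℝ)*(H+1/2))) =
        (fun τ : ℝ => cH H τ (τ^3) * (H+1/2) / τ ^ (4*H+1)) := by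
      funext τ
      rw [pow_one, show ((1:ℕ):ℝ)*(H-1/2) + ((3:ℕ):ℝ)*(H+1/2) = 4*H+1 by push_cast; ring]
    rwa [he] at h
  have h12 : Tendsto (fun τ : ℝ => cH H τ (τ^2) * (H+1/2) / τ ^ (3*H+1/2))
      (nhdsWithin 0 (Ioi 0)) (nhds 1) := by
    have h := r_tendsto hH 1 2 (by norm_num)
    have he : (fun τ : ℝ => cH H (τ^1) (τ^2) * (H+1/2) /
        τ ^ (((1:ℕ):ℝ)*(H-1/2) + ((2:ℕ):ℝ)*(H+1/2))) =
        (fun τ : ℝ => cH H τ (τ^2) * (H+1/2) / τ ^ (3*H+1/2)) := by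
      funext τ
      rw [pow_one, show ((1:ℕ):ℝ)*(H-1/2) + ((2:ℕ):ℝ)*(H+1/2) = 3*H+1/2 by push_cast; ring]
    rwa [he] at h
  have h23 : Tendsto (fun τ : ℝ => cH H (τ^2) (τ^3) * (H+1/2) / τ ^ (5*H+1/2))
      (nhdsWithin 0 (Ioi 0)) (nhds 1) := by
    have h := r_tendsto hH 2 3 (by norm_num)
    have he : (fun τ : ℝ => cH H (τ^2) (τ^3) * (H+1/2) /
        τ ^ (((2:ℕ):ℝ)*(H-1/2) + ((3:ℕ):ℝ)*(H+1/2))) =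
        (fun τ : ℝ => cH H (τ^2) (τ^3) * (H+1/2) / τ ^ (5*H+1/2)) := by
      funext τ
      rw [show ((2:ℕ):ℝ)*(H-1/2) + ((3:ℕ):ℝ)*(H+1/2) = 5*H+1/2 by push_cast; ring]
    rwa [he] at h
  have hτ0' : Tendsto (fun τ : ℝ => τ) (nhdsWithin (0:ℝ) (Ioi 0)) (nhds 0) :=
    tendsto_id.mono_left nhdsWithin_le_nhds
  -- limit of the explicit quotient function F
  have hden_ne : ((1/(4*H^2) - 0*(1:ℝ)^2/(H+1/2)^2) * (4*H*(1-2*H)/(2*H+1)^2)) ≠ 0 := by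
    apply mul_ne_zero _ hC
    simp only [zero_mul, zero_div, sub_zero]
    positivity
  have hF : Tendsto (fun τ : ℝ =>
      ((cH H τ (τ^3) * (H+1/2) / τ ^ (4*H+1)) / (2*H*(H+1/2))
        - (cH H τ (τ^2) * (H+1/2) / τ ^ (3*H+1/2))
          * (cH H (τ^2) (τ^3) * (H+1/2) / τ ^ (5*H+1/2)) / (H+1/2)^2) /
      ((1/(4*H^2) - τ * (cH H (τ^2) (τ^3) * (H+1/2) / τ ^ (5*H+1/2))^2 / (H+1/2)^2)
        * (4*H*(1-2*H)/(2*H+1)^2)))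
      (nhdsWithin 0 (Ioi 0)) (nhds 1) := by
    have hnum : Tendsto (fun τ : ℝ =>
        (cH H τ (τ^3) * (H+1/2) / τ ^ (4*H+1)) / (2*H*(H+1/2))
        - (cH H τ (τ^2) * (H+1/2) / τ ^ (3*H+1/2))
          * (cH H (τ^2) (τ^3) * (H+1/2) / τ ^ (5*H+1/2)) / (H+1/2)^2)
        (nhdsWithin 0 (Ioi 0)) (nhds (1/(2*H*(H+1/2)) - 1*1/(H+1/2)^2)) :=
      (h13.div_const _).sub ((h12.mul h23).div_const _)
    have hden : Tendsto (fun τ : ℝ =>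
        (1/(4*H^2) - τ * (cH H (τ^2) (τ^3) * (H+1/2) / τ ^ (5*H+1/2))^2 / (H+1/2)^2)
          * (4*H*(1-2*H)/(2*H+1)^2))
        (nhdsWithin 0 (Ioi 0))
        (nhds ((1/(4*H^2) - 0*(1:ℝ)^2/(H+1/2)^2) * (4*H*(1-2*H)/(2*H+1)^2))) :=
      (tendsto_const_nhds.sub (((hτ0'.mul (h23.pow 2)).div_const _))).mul_const _
    have hval : (1/(2*H*(H+1/2)) - 1*1/(H+1/2)^2) /
        ((1/(4*H^2) - 0*(1:ℝ)^2/(H+1/2)^2) * (4*H*(1-2*H)/(2*H+1)^2)) = 1 := by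
      rw [div_eq_one_iff_eq hden_ne]
      field_simp
      ring
    have := hnum.div hden hden_ne
    rwa [hval] at this
  -- eventual equality of the target quotient with F
  have hEq : ∀ᶠ τ in nhdsWithin (0:ℝ) (Ioi 0),
      ((cH H τ (τ ^ 3) * cH H (τ ^ 2) (τ ^ 2)
          - cH H τ (τ ^ 2) * cH H (τ ^ 2) (τ ^ 3)) /
        (cH H (τ ^ 2) (τ ^ 2) * cH H (τ ^ 3) (τ ^ 3)
          - (cH H (τ ^ 2) (τ ^ 3)) ^ 2)) /
        ((4 * H * (1 - 2 * H) / (2 * H + 1) ^ 2) * τ ^ ((1 : ℝ) - 2 * H)) =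
      ((cH H τ (τ^3) * (H+1/2) / τ ^ (4*H+1)) / (2*H*(H+1/2))
        - (cH H τ (τ^2) * (H+1/2) / τ ^ (3*H+1/2))
          * (cH H (τ^2) (τ^3) * (H+1/2) / τ ^ (5*H+1/2)) / (H+1/2)^2) /
      ((1/(4*H^2) - τ * (cH H (τ^2) (τ^3) * (H+1/2) / τ ^ (5*H+1/2))^2 / (H+1/2)^2)
        * (4*H*(1-2*H)/(2*H+1)^2)) := by
    filter_upwards [Ioo_mem_nhdsGT_of_mem (c := (0:ℝ)) (b := (0:ℝ)) (a := 1)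
      ⟨le_refl 0, zero_lt_one⟩] with τ hτ
    obtain ⟨hτ0, hτ1⟩ := hτ
    have hne13 : (τ : ℝ) ^ (4*H+1) ≠ 0 := (Real.rpow_pos_of_pos hτ0 _).ne'
    have hne12 : (τ : ℝ) ^ (3*H+1/2) ≠ 0 := (Real.rpow_pos_of_pos hτ0 _).ne'
    have hne23 : (τ : ℝ) ^ (5*H+1/2) ≠ 0 := (Real.rpow_pos_of_pos hτ0 _).ne'
    have h22 : cH H (τ^2) (τ^2) = τ ^ (4*H) / (2*H) := by
      rw [cH_diag hH hH' (by positivity : (0:ℝ) < τ^2)]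
      congr 1
      rw [← Real.rpow_natCast τ 2, ← Real.rpow_mul hτ0.le]
      congr 1
      push_cast; ring
    have h33 : cH H (τ^3) (τ^3) = τ ^ (6*H) / (2*H) := by
      rw [cH_diag hH hH' (by positivity : (0:ℝ) < τ^3)]
      congr 1
      rw [← Real.rpow_natCast τ 3, ← Real.rpow_mul hτ0.le]
      congr 1
      push_cast; ring
    have e13 : cH H τ (τ^3) =
        (cH H τ (τ^3) * (H+1/2) / τ ^ (4*H+1)) * τ ^ (4*H+1) / (H+1/2) := by
      field_simp
    have e12 : cH H τ (τ^2) =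
        (cH H τ (τ^2) * (H+1/2) / τ ^ (3*H+1/2)) * τ ^ (3*H+1/2) / (H+1/2) := by
      field_simp
    have e23 : cH H (τ^2) (τ^3) =
        (cH H (τ^2) (τ^3) * (H+1/2) / τ ^ (5*H+1/2)) * τ ^ (5*H+1/2) / (H+1/2) := by
      field_simp
    have k1 : τ ^ (4*H+1) * τ ^ (4*H) = τ ^ (10*H) * τ ^ ((1:ℝ)-2*H) := by
      rw [← Real.rpow_add hτ0, ← Real.rpow_add hτ0]; congr 1; ring
    have k2 : τ ^ (3*H+1/2) * τ ^ (5*H+1/2) = τ ^ (10*H) * τ ^ ((1:ℝ)-2*H) := by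
      rw [← Real.rpow_add hτ0, ← Real.rpow_add hτ0]; congr 1; ring
    have k3 : τ ^ (4*H) * τ ^ (6*H) = τ ^ (10*H) := by
      rw [← Real.rpow_add hτ0]; congr 1; ring
    have k4 : τ ^ (5*H+1/2) * τ ^ (5*H+1/2) = τ ^ (10*H) * τ := by
      rw [← Real.rpow_add hτ0,
        show (5*H+1/2) + (5*H+1/2) = 10*H + 1 by ring,
        Real.rpow_add hτ0, Real.rpow_one]
    have hApos : (0:ℝ) < τ ^ (10*H) := Real.rpow_pos_of_pos hτ0 _
    have hBpos : (0:ℝ) < τ ^ ((1:ℝ)-2*H) := Real.rpow_pos_of_pos hτ0 _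
    set R13 := cH H τ (τ^3) * (H+1/2) / τ ^ (4*H+1) with hR13
    set R12 := cH H τ (τ^2) * (H+1/2) / τ ^ (3*H+1/2) with hR12
    set R23 := cH H (τ^2) (τ^3) * (H+1/2) / τ ^ (5*H+1/2) with hR23
    clear_value R13 R12 R23
    have hnum : cH H τ (τ ^ 3) * cH H (τ ^ 2) (τ ^ 2)
        - cH H τ (τ ^ 2) * cH H (τ ^ 2) (τ ^ 3)
        = (τ ^ (10*H) * τ ^ ((1:ℝ)-2*H)) * (R13 / (2*H*(H+1/2)) - R12 * R23 / (H+1/2)^2) := by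
      rw [e13, h22, e12, e23]
      calc (R13 * τ ^ (4*H+1) / (H+1/2)) * (τ ^ (4*H) / (2*H))
            - (R12 * τ ^ (3*H+1/2) / (H+1/2)) * (R23 * τ ^ (5*H+1/2) / (H+1/2))
          = (τ ^ (4*H+1) * τ ^ (4*H)) * (R13 / (2*H*(H+1/2)))
            - (τ ^ (3*H+1/2) * τ ^ (5*H+1/2)) * (R12 * R23 / (H+1/2)^2) := by
              field_simp
        _ = _ := by rw [k1, k2]; field_simp
    have hden : cH H (τ ^ 2) (τ ^ 2) * cH H (τ ^ 3) (τ ^ 3)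
        - (cH H (τ ^ 2) (τ ^ 3)) ^ 2
        = τ ^ (10*H) * (1/(4*H^2) - τ * R23^2 / (H+1/2)^2) := by
      rw [h22, h33, e23]
      calc (τ ^ (4*H) / (2*H)) * (τ ^ (6*H) / (2*H))
            - (R23 * τ ^ (5*H+1/2) / (H+1/2))^2
          = (τ ^ (4*H) * τ ^ (6*H)) * (1/(4*H^2))
            - (τ ^ (5*H+1/2) * τ ^ (5*H+1/2)) * (R23^2/(H+1/2)^2) := by
              field_simp
              ring
        _ = _ := by rw [k3, k4]; field_simp
    rw [hnum, hden, mul_assoc, mul_div_mul_comm, div_self hApos.ne', one_mul, div_div,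
      show (1/(4*H^2) - τ * R23^2 / (H+1/2)^2) * (4 * H * (1 - 2 * H) / (2 * H + 1) ^ 2
        * τ ^ ((1:ℝ) - 2*H)) = τ ^ ((1:ℝ)-2*H) *
        ((1/(4*H^2) - τ * R23^2 / (H+1/2)^2) * (4*H*(1-2*H)/(2*H+1)^2)) by ring,
      mul_div_mul_left _ _ hBpos.ne']
  have hmain : Tendsto (fun τ : ℝ =>
      ((cH H τ (τ ^ 3) * cH H (τ ^ 2) (τ ^ 2)
          - cH H τ (τ ^ 2) * cH H (τ ^ 2) (τ ^ 3)) /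
        (cH H (τ ^ 2) (τ ^ 2) * cH H (τ ^ 3) (τ ^ 3)
          - (cH H (τ ^ 2) (τ ^ 3)) ^ 2)) /
        ((4 * H * (1 - 2 * H) / (2 * H + 1) ^ 2) * τ ^ ((1 : ℝ) - 2 * H)))
      (nhdsWithin 0 (Ioi 0)) (nhds 1) :=
    hF.congr' (EventuallyEq.symm hEq)
  refine ⟨hmain, ?_⟩
  have hne := hmain.eventually_ne one_ne_zero
  filter_upwards [hne] with τ hτ
  intro h0
  apply hτ
  rw [h0, zero_div]
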